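/- arXiv:2505.13170 — 3 statements merged into one kernel-verified Lean document; each statement's English description precedes it below -/
import Mathlib

section
/- Let X be a nonnegative random variable with finite variance and E[X] > 0. Then E[1/(1+X)] ≤ (1 + sqrt(Var(X))) / E[X]. -/
open MeasureTheory ProbabilityTheory in
theorem stmt_3 {Ω : Type*} [MeasurableSpace Ω] (μ : Measure Ω) [IsProbabilityMeasure μ]
    (X : Ω → ℝ) (hX : Measurable X) (hX0 : ∀ ω, 0 ≤ X ω)
    (hL2 : MemLp X 2 μ) (hEX : 0 < ∫ ω, X ω ∂μ) :
    ∫ ω, 1 / (1 + X ω) ∂μ ≤ (1 + Real.sqrt (variance X μ)) / ∫ ω, X ω ∂μ := by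
  set m : ℝ := ∫ ω, X ω ∂μ with hm
  have hY2 : MemLp (fun ω => |X ω - m|) 2 μ := (hL2.sub (memLp_const m)).abs
  have hY1 : Integrable (fun ω => |X ω - m|) μ := hY2.integrable one_le_two
  -- pointwise bound
  have hpt : ∀ ω, 1 / (1 + X ω) ≤ (1 + |X ω - m|) / m := by
    intro ω
    have h1 : (0:ℝ) < 1 + X ω := by linarith [hX0 ω]
    rw [div_le_div_iff₀ h1 hEX]
    have ha : 0 ≤ |X ω - m| := abs_nonneg _
    have ha2 : m - X ω ≤ |X ω - m| := by
      rw [abs_sub_comm]; exact le_abs_self _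
    nlinarith [mul_nonneg ha (hX0 ω)]
  -- integrability of LHS
  have hfm : Integrable (fun ω => 1 / (1 + X ω)) μ := by
    refine Integrable.mono' (integrable_const 1) ?_ ?_
    · have : Measurable fun ω => 1 / (1 + X ω) := measurable_const.div (measurable_const.add hX)
      exact this.aestronglyMeasurable
    · filter_upwards with ω
      have h1 : (0:ℝ) < 1 + X ω := by linarith [hX0 ω]
      rw [Real.norm_eq_abs, abs_of_nonneg (by positivity)]
      rw [div_le_one h1]; linarith [hX0 ω]
  have step1 : ∫ ω, 1 / (1 + X ω) ∂μ ≤ ∫ ω, (1 + |X ω - m|) / m ∂μ := by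
    refine integral_mono hfm ?_ hpt
    exact ((integrable_const 1).add hY1).div_const m
  have step2 : ∫ ω, (1 + |X ω - m|) / m ∂μ = (1 + ∫ ω, |X ω - m| ∂μ) / m := by
    rw [integral_div, integral_add (integrable_const 1) hY1, integral_const]
    simp
  -- E|X - m| ≤ sqrt (variance)
  have step3 : ∫ ω, |X ω - m| ∂μ ≤ Real.sqrt (variance X μ) := by
    have hconj : Real.HolderConjugate 2 2 := ⟨by norm_num, by norm_num, by norm_num⟩
    have h := integral_mul_le_Lp_mul_Lq_of_nonneg hconj
      (f := fun ω => |X ω - m|) (g := fun _ => (1:ℝ))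
      (Filter.Eventually.of_forall fun ω => abs_nonneg _)
      (Filter.Eventually.of_forall fun _ => zero_le_one)
      (by simpa using hY2) (by simpa using (memLp_const (1:ℝ) (p := 2)))
    simp only [mul_one] at h
    have h2 : ∫ ω, |X ω - m| ^ (2:ℝ) ∂μ = variance X μ := by
      rw [variance_eq_integral hL2.aemeasurable]
      refine integral_congr_ae (Filter.Eventually.of_forall fun ω => ?_)
      simp [Real.rpow_two, sq_abs, hm]
    have h3 : ∫ (_ : Ω), (1:ℝ) ^ (2:ℝ) ∂μ = 1 := by simp
    rw [h2, h3] at h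
    calc ∫ ω, |X ω - m| ∂μ ≤ variance X μ ^ (1/2:ℝ) * 1 ^ (1/2:ℝ) := h
      _ = Real.sqrt (variance X μ) := by
          rw [Real.one_rpow, mul_one, ← Real.sqrt_eq_rpow]
  calc ∫ ω, 1 / (1 + X ω) ∂μ ≤ (1 + ∫ ω, |X ω - m| ∂μ) / m := by rw [← step2]; exact step1
    _ ≤ (1 + Real.sqrt (variance X μ)) / m := by gcongr
end

section
/- Let H, A be bounded operators on a Hilbert space with H self-adjoint. Then the operator (HA − AH)(HA − AH)* satisfies the inequality [H,A][H,A]* ≤ 2( ‖A‖² H² + A H² A* ). -/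
set_option maxHeartbeats 1000000


open ContinuousLinearMap in
theorem stmt_13 {𝓗 : Type*} [NormedAddCommGroup 𝓗] [InnerProductSpace ℂ 𝓗] [CompleteSpace 𝓗]
    (K A : 𝓗 →L[ℂ] 𝓗) (hK : adjoint K = K) :
    ((2 : ℝ) • ((‖A‖ ^ 2 : ℝ) • (K * K) + A * (K * K) * adjoint A)
      - (K * A - A * K) * adjoint (K * A - A * K)).IsPositive := by
  have hKsa : IsSelfAdjoint K := by rw [IsSelfAdjoint, star_eq_adjoint, hK]
  have hBadj : adjoint (K * A - A * K) = adjoint A * K - K * adjoint A := by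
    rw [map_sub]
    simp only [← star_eq_adjoint, star_mul, hKsa.star_eq]
  constructor
  · have hKK : IsSelfAdjoint (K * K) := by rw [IsSelfAdjoint, star_mul, hKsa.star_eq]
    have h1 : IsSelfAdjoint (A * (K * K) * adjoint A) := by
      rw [← star_eq_adjoint]
      exact hKK.conjugate A
    have h2 : IsSelfAdjoint ((K * A - A * K) * adjoint (K * A - A * K)) := by
      rw [← star_eq_adjoint]
      exact IsSelfAdjoint.mul_star_self _
    have hs1 : IsSelfAdjoint ((‖A‖ ^ 2 : ℝ) • (K * K)) :=
      IsSelfAdjoint.smul (r := (‖A‖ ^ 2 : ℝ)) (star_trivial _) hKK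
    have hs2 : IsSelfAdjoint ((2 : ℝ) • ((‖A‖ ^ 2 : ℝ) • (K * K) + A * (K * K) * adjoint A)) :=
      IsSelfAdjoint.smul (r := (2 : ℝ)) (star_trivial _) (hs1.add h1)
    exact ContinuousLinearMap.isSelfAdjoint_iff_isSymmetric.mp (hs2.sub h2)
  · intro x
    rw [reApplyInnerSelf]
    have hBx : (adjoint (K * A - A * K)) x = adjoint A (K x) - K (adjoint A x) := by
      rw [hBadj]; rfl
    have key : ‖adjoint A (K x) - K (adjoint A x)‖ ^ 2
        ≤ 2 * (‖A‖ ^ 2 * ‖K x‖ ^ 2 + ‖K (adjoint A x)‖ ^ 2) := by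
      have h1 : ‖adjoint A (K x)‖ ≤ ‖A‖ * ‖K x‖ := by
        calc ‖adjoint A (K x)‖ ≤ ‖adjoint A‖ * ‖K x‖ := le_opNorm _ _
        _ = ‖A‖ * ‖K x‖ := by rw [← star_eq_adjoint, norm_star]
      have h2 : ‖adjoint A (K x) - K (adjoint A x)‖
          ≤ ‖adjoint A (K x)‖ + ‖K (adjoint A x)‖ := norm_sub_le _ _
      have h3 := norm_nonneg (adjoint A (K x))
      have h4 := norm_nonneg (K (adjoint A x))
      have h5 := norm_nonneg (adjoint A (K x) - K (adjoint A x))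
      set a := ‖adjoint A (K x)‖ with ha
      set b := ‖K (adjoint A x)‖ with hb
      set c := ‖adjoint A (K x) - K (adjoint A x)‖ with hc
      set d := ‖A‖ * ‖K x‖ with hd
      have hd2 : d ^ 2 = ‖A‖ ^ 2 * ‖K x‖ ^ 2 := by rw [hd]; ring
      rw [← hd2]
      nlinarith [sq_nonneg (a - b), sq_nonneg d]
    have hK2 : ∀ y : 𝓗, (inner ℂ ((K * K) y) y : ℂ) = (‖K y‖ : ℂ) ^ 2 := by
      intro y
      rw [ContinuousLinearMap.mul_apply, ← adjoint_inner_right K, hK, inner_self_eq_norm_sq_to_K]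
      norm_num
    have hAK : (inner ℂ ((A * (K * K) * adjoint A) x) x : ℂ)
        = (‖K (adjoint A x)‖ : ℂ) ^ 2 := by
      rw [ContinuousLinearMap.mul_apply, ContinuousLinearMap.mul_apply, ← adjoint_inner_right A, ContinuousLinearMap.mul_apply, ← adjoint_inner_right K, hK,
        inner_self_eq_norm_sq_to_K]
      norm_num
    have hB : (inner ℂ (((K * A - A * K) * adjoint (K * A - A * K)) x) x : ℂ)
        = (‖adjoint A (K x) - K (adjoint A x)‖ : ℂ) ^ 2 := by
      rw [ContinuousLinearMap.mul_apply, ← adjoint_inner_right (K * A - A * K), hBx,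
        inner_self_eq_norm_sq_to_K]
      norm_num
    have e1 : RCLike.re (inner ℂ (((2 : ℝ) • ((‖A‖ ^ 2 : ℝ) • (K * K) + A * (K * K) * adjoint A)
        - (K * A - A * K) * adjoint (K * A - A * K)) x) x : ℂ)
        = 2 * (‖A‖ ^ 2 * ‖K x‖ ^ 2 + ‖K (adjoint A x)‖ ^ 2)
          - ‖adjoint A (K x) - K (adjoint A x)‖ ^ 2 := by
      rw [RCLike.real_smul_eq_coe_smul (K := ℂ) (2:ℝ),
        RCLike.real_smul_eq_coe_smul (K := ℂ) (‖A‖ ^ 2 : ℝ)]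
      simp only [sub_apply, smul_apply, add_apply, inner_sub_left, inner_add_left,
        inner_smul_left]
      rw [hK2, hAK, hB]
      simp only [map_sub, map_add, RCLike.mul_re, RCLike.conj_re, RCLike.conj_im]
      simp [← Complex.ofReal_pow]
    rw [e1]
    linarith
end

section
/- Let F_n : S → ℂ be a sequence of continuous functions on the closed strip S = {z ∈ ℂ : −β ≤ Im z ≤ 0} (β > 0), holomorphic in the interior, uniformly bounded by M, such that the boundary restrictions F_n(t) and F_n(t − iβ) converge uniformly on compact subsets of ℝ to continuous functions g, h : ℝ → ℂ. Then F_n converges locally uniformly on S to a continuous function F, holomorphic in the interior of S, with F(t) = g(t) and F(t − iβ) = h(t) for all t ∈ ℝ. -/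
open Topology

open Filter Set Complex

lemma strip_bound (β : ℝ) (hβ : 0 < β) (f : ℂ → ℂ) (Cf ε R : ℝ)
    (hCf : 0 ≤ Cf) (hε : 0 < ε) (hR : 0 < R)
    (hfc : ContinuousOn f {z : ℂ | -β ≤ z.im ∧ z.im ≤ 0})
    (hfd : ∀ z : ℂ, -β < z.im → z.im < 0 → DifferentiableAt ℂ f z)
    (hfb : ∀ z : ℂ, -β ≤ z.im → z.im ≤ 0 → ‖f z‖ ≤ Cf)
    (z₀ : ℂ) (hz₁ : -β ≤ z₀.im) (hz₂ : z₀.im ≤ 0)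
    (hfar : Cf * (2 * β ^ 2) / R ^ 2 ≤ ε)
    (hnear : ∀ t : ℝ, |t - z₀.re| ≤ R →
      ‖f (t : ℂ)‖ ≤ ε ∧ ‖f ((t : ℂ) - Complex.I * β)‖ ≤ ε) :
    ‖f z₀‖ ≤ 2 * ε := by
  set δ : ℝ := (2 * β ^ 2)⁻¹ with hδdef
  have hδ : 0 < δ := by positivity
  set x₀ : ℝ := z₀.re with hx₀
  set w : ℂ → ℂ := fun z => 1 + (δ : ℂ) * (z - (x₀ : ℂ)) ^ 2 with hw
  -- real part computation
  have hwre : ∀ z : ℂ, (w z).re = 1 + δ * ((z.re - x₀) ^ 2 - z.im ^ 2) := by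
    intro z
    simp [hw, Complex.add_re, Complex.mul_re, pow_two, Complex.mul_im,
      Complex.sub_re, Complex.sub_im, Complex.ofReal_re, Complex.ofReal_im]
  have hrege : ∀ z : ℂ, -β ≤ z.im → z.im ≤ 0 →
      1 / 2 + δ * (z.re - x₀) ^ 2 ≤ (w z).re := by
    intro z h1 h2
    rw [hwre]
    have him : z.im ^ 2 ≤ β ^ 2 := by nlinarith
    have : δ * z.im ^ 2 ≤ 1 / 2 := by
      rw [hδdef]
      rw [inv_mul_le_iff₀ (by positivity)]
      nlinarith
    nlinarith [mul_le_mul_of_nonneg_left him hδ.le]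
  have hwnorm : ∀ z : ℂ, -β ≤ z.im → z.im ≤ 0 →
      1 / 2 + δ * (z.re - x₀) ^ 2 ≤ ‖w z‖ := by
    intro z h1 h2
    exact (hrege z h1 h2).trans (Complex.re_le_norm _)
  have hwpos : ∀ z : ℂ, -β ≤ z.im → z.im ≤ 0 → w z ≠ 0 := by
    intro z h1 h2
    intro h0
    have := hwnorm z h1 h2
    rw [h0, norm_zero] at this
    nlinarith [sq_nonneg (z.re - x₀), mul_nonneg hδ.le (sq_nonneg (z.re - x₀))]
  have hwcont : Continuous w :=
    continuous_const.add (continuous_const.mul ((continuous_id.sub continuous_const).pow 2))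
  set G : ℂ → ℂ := fun z => f z * (w z)⁻¹ with hG
  -- φ bound ≤ 2 on strip
  have hφ2 : ∀ z : ℂ, -β ≤ z.im → z.im ≤ 0 → ‖(w z)⁻¹‖ ≤ 2 := by
    intro z h1 h2
    rw [norm_inv]
    have h := hwnorm z h1 h2
    have : (1:ℝ)/2 ≤ ‖w z‖ := by nlinarith [mul_nonneg hδ.le (sq_nonneg (z.re - x₀))]
    rw [inv_le_comm₀ (by linarith) (by norm_num)]
    linarith
  -- φ far bound
  have hφfar : ∀ z : ℂ, -β ≤ z.im → z.im ≤ 0 → R ≤ |z.re - x₀| →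
      ‖(w z)⁻¹‖ ≤ (δ * R ^ 2)⁻¹ := by
    intro z h1 h2 hfar'
    rw [norm_inv]
    have h := hwnorm z h1 h2
    have hr2 : R ^ 2 ≤ (z.re - x₀) ^ 2 := by
      nlinarith [_root_.sq_abs (z.re - x₀), abs_nonneg (z.re - x₀)]
    have h2' : δ * R ^ 2 ≤ ‖w z‖ := by nlinarith [mul_le_mul_of_nonneg_left hr2 hδ.le]
    have hpos : 0 < δ * R ^ 2 := by positivity
    exact inv_anti₀ hpos h2'
  -- boundary bound for G
  have hbdry : ∀ z : ℂ, (z.im = 0 ∨ z.im = -β) → ‖G z‖ ≤ 2 * ε := by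
    intro z hzim
    have hzS : -β ≤ z.im ∧ z.im ≤ 0 := by rcases hzim with h | h <;> simp [h] <;> linarith
    by_cases hc : |z.re - x₀| ≤ R
    · -- near
      have hf : ‖f z‖ ≤ ε := by
        rcases hzim with h0 | hb
        · have hz : z = (z.re : ℂ) := Complex.ext (by simp) (by simp [h0])
          rw [hz]; exact (hnear z.re hc).1
        · have hz : z = (z.re : ℂ) - Complex.I * β :=
            Complex.ext (by simp) (by simp [hb])
          rw [hz]; exact (hnear z.re hc).2
      calc ‖G z‖ = ‖f z‖ * ‖(w z)⁻¹‖ := norm_mul _ _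
        _ ≤ ε * 2 := mul_le_mul hf (hφ2 z hzS.1 hzS.2) (norm_nonneg _) hε.le
        _ = 2 * ε := by ring
    · -- far
      push_neg at hc
      calc ‖G z‖ = ‖f z‖ * ‖(w z)⁻¹‖ := norm_mul _ _
        _ ≤ Cf * (δ * R ^ 2)⁻¹ := by
            exact mul_le_mul (hfb z hzS.1 hzS.2) (hφfar z hzS.1 hzS.2 hc.le)
              (norm_nonneg _) hCf
        _ = Cf * (2 * β ^ 2) / R ^ 2 := by
            rw [hδdef]; field_simp
        _ ≤ ε := hfar
        _ ≤ 2 * ε := by linarith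
  -- Phragmen-Lindelof
  have hGle : ‖G z₀‖ ≤ 2 * ε := by
    have hopen : IsOpen (Complex.im ⁻¹' Ioo (-β) 0) :=
      (isOpen_Ioo).preimage Complex.continuous_im
    have hsub : closure (Complex.im ⁻¹' Ioo (-β) 0) ⊆ {z : ℂ | -β ≤ z.im ∧ z.im ≤ 0} := by
      intro z hz
      have := (Complex.continuous_im.closure_preimage_subset (Ioo (-β) 0)) hz
      have := closure_Ioo (by linarith : (-β) ≠ 0) ▸ this
      exact ⟨this.1, this.2⟩
    refine PhragmenLindelof.horizontal_strip (a := -β) (b := 0) (C := 2 * ε) ?_ ?_ ?_ ?_ hz₁ hz₂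
    · constructor
      · intro z hz
        have hz' : -β < z.im ∧ z.im < 0 := hz
        apply DifferentiableAt.differentiableWithinAt
        exact ((hfd z hz'.1 hz'.2).mul (((differentiableAt_const _).add
          (((differentiableAt_id.sub (differentiableAt_const _)).pow 2).const_mul _)).inv
          (hwpos z hz'.1.le hz'.2.le)))
      · apply ContinuousOn.mono ?_ hsub
        apply ContinuousOn.mul (hfc)
        apply ContinuousOn.inv₀
        · exact hwcont.continuousOn
        · exact fun z hz => hwpos z hz.1 hz.2
    · refine ⟨0, by rw [zero_sub, neg_neg]; exact div_pos Real.pi_pos hβ, 0, ?_⟩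
      apply Asymptotics.IsBigO.of_bound (2 * Cf)
      rw [Filter.eventually_inf_principal]
      apply Filter.Eventually.of_forall
      intro z hz
      have hz' : -β < z.im ∧ z.im < 0 := hz
      simp only [Real.exp_zero, mul_one, zero_mul, norm_one]
      calc ‖G z‖ = ‖f z‖ * ‖(w z)⁻¹‖ := norm_mul _ _
        _ ≤ Cf * 2 := mul_le_mul (hfb z hz'.1.le hz'.2.le) (hφ2 z hz'.1.le hz'.2.le)
            (norm_nonneg _) hCf
        _ = 2 * Cf := by ring
    · exact fun z hz => hbdry z (Or.inr hz)
    · exact fun z hz => hbdry z (Or.inl hz)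
  -- conclude
  have hwz₀ : w z₀ = ((1 - δ * z₀.im ^ 2 : ℝ) : ℂ) := by
    have hzx : z₀ - (x₀ : ℂ) = (z₀.im : ℂ) * Complex.I := by
      apply Complex.ext <;> simp [hx₀]
    rw [hw]
    simp only
    rw [hzx, mul_pow, Complex.I_sq]
    push_cast
    ring
  have hδim : δ * z₀.im ^ 2 ≤ 1 / 2 := by
    rw [hδdef, inv_mul_le_iff₀ (by positivity)]
    nlinarith
  have hwz₀norm : ‖w z₀‖ ≤ 1 := by
    rw [hwz₀, Complex.norm_real, Real.norm_eq_abs,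
      _root_.abs_of_nonneg (by nlinarith [mul_nonneg hδ.le (sq_nonneg z₀.im)] : (0:ℝ) ≤ 1 - δ * z₀.im ^ 2)]
    nlinarith [mul_nonneg hδ.le (sq_nonneg z₀.im)]
  have hwz₀ne : w z₀ ≠ 0 := hwpos z₀ hz₁ hz₂
  have : ‖f z₀‖ = ‖G z₀‖ * ‖w z₀‖ := by
    rw [hG]
    simp only
    rw [norm_mul, norm_inv]
    have hwn0 : ‖w z₀‖ ≠ 0 := norm_ne_zero_iff.mpr hwz₀ne
    rw [mul_assoc, inv_mul_cancel₀ hwn0, mul_one]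
  rw [this]
  calc ‖G z₀‖ * ‖w z₀‖ ≤ (2 * ε) * 1 :=
        mul_le_mul hGle hwz₀norm (norm_nonneg _) (by linarith)
    _ = 2 * ε := mul_one _

open Filter in
theorem stmt_16 (β : ℝ) (hβ : 0 < β)
    (S : Set ℂ) (hS : S = {z : ℂ | -β ≤ z.im ∧ z.im ≤ 0})
    (F : ℕ → ℂ → ℂ) (M : ℝ)
    (hcont : ∀ n, ContinuousOn (F n) S)
    (hholo : ∀ n, ∀ z : ℂ, -β < z.im → z.im < 0 → DifferentiableAt ℂ (F n) z)
    (hbound : ∀ n, ∀ z ∈ S, ‖F n z‖ ≤ M)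
    (g h : ℝ → ℂ) (hg : Continuous g) (hh : Continuous h)
    (hgconv : ∀ K : Set ℝ, IsCompact K →
      TendstoUniformlyOn (fun n (t : ℝ) => F n (t : ℂ)) g atTop K)
    (hhconv : ∀ K : Set ℝ, IsCompact K →
      TendstoUniformlyOn (fun n (t : ℝ) => F n ((t : ℂ) - Complex.I * β)) h atTop K) :
    ∃ Flim : ℂ → ℂ, ContinuousOn Flim S ∧
      (∀ z : ℂ, -β < z.im → z.im < 0 → DifferentiableAt ℂ Flim z) ∧
      (∀ t : ℝ, Flim (t : ℂ) = g t ∧ Flim ((t : ℂ) - Complex.I * β) = h t) ∧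
      (∀ K : Set ℂ, K ⊆ S → IsCompact K →
        TendstoUniformlyOn (fun n => F n) Flim atTop K) := by
  subst hS
  set S : Set ℂ := {z : ℂ | -β ≤ z.im ∧ z.im ≤ 0} with hS
  have h0S : (0 : ℂ) ∈ S := by
    constructor <;> simp <;> linarith
  have hM : 0 ≤ M := le_trans (norm_nonneg _) (hbound 0 0 h0S)
  -- the key uniform Cauchy estimate on vertical substrips
  have key : ∀ a b : ℝ, ∀ ε > (0:ℝ), ∃ N : ℕ, ∀ m ≥ N, ∀ n ≥ N, ∀ z ∈ S,
      a ≤ z.re → z.re ≤ b → ‖F m z - F n z‖ ≤ 2 * ε := by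
    intro a b ε hε
    set R : ℝ := Real.sqrt ((2 * M + 1) * (2 * β ^ 2) / ε) with hRdef
    have hargpos : 0 < (2 * M + 1) * (2 * β ^ 2) / ε := by positivity
    have hR : 0 < R := Real.sqrt_pos.mpr hargpos
    have hRsq : R ^ 2 = (2 * M + 1) * (2 * β ^ 2) / ε := Real.sq_sqrt hargpos.le
    obtain ⟨N₁, hN₁⟩ := Metric.uniformCauchySeqOn_iff.mp
      ((hgconv (Set.Icc (a - R) (b + R)) isCompact_Icc).uniformCauchySeqOn) ε hε
    obtain ⟨N₂, hN₂⟩ := Metric.uniformCauchySeqOn_iff.mp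
      ((hhconv (Set.Icc (a - R) (b + R)) isCompact_Icc).uniformCauchySeqOn) ε hε
    refine ⟨max N₁ N₂, fun m hm n hn z hz ha hb => ?_⟩
    have hm₁ : N₁ ≤ m := le_trans (le_max_left _ _) hm
    have hm₂ : N₂ ≤ m := le_trans (le_max_right _ _) hm
    have hn₁ : N₁ ≤ n := le_trans (le_max_left _ _) hn
    have hn₂ : N₂ ≤ n := le_trans (le_max_right _ _) hn
    refine strip_bound β hβ (fun w => F m w - F n w) (2 * M) ε R (by linarith) hε hR
      ?_ ?_ ?_ z hz.1 hz.2 ?_ ?_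
    · exact (hcont m).sub (hcont n)
    · exact fun w h1 h2 => (hholo m w h1 h2).sub (hholo n w h1 h2)
    · intro w h1 h2
      have hwS : w ∈ S := ⟨h1, h2⟩
      calc ‖F m w - F n w‖ ≤ ‖F m w‖ + ‖F n w‖ := norm_sub_le _ _
        _ ≤ M + M := add_le_add (hbound m w hwS) (hbound n w hwS)
        _ = 2 * M := by ring
    · have heq : (2 * M) * (2 * β ^ 2) / R ^ 2 = ε * (2 * M) / (2 * M + 1) := by
        rw [hRsq]
        field_simp
      rw [heq, div_le_iff₀ (by linarith)]
      nlinarith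
    · intro t ht
      have htmem : t ∈ Set.Icc (a - R) (b + R) := by
        rw [abs_le] at ht
        constructor <;> linarith [ht.1, ht.2]
      constructor
      · rw [← dist_eq_norm]
        exact (hN₁ m hm₁ n hn₁ t htmem).le
      · rw [← dist_eq_norm]
        exact (hN₂ m hm₂ n hn₂ t htmem).le
  -- pointwise limit
  set Flim : ℂ → ℂ := fun z => limUnder atTop (fun n => F n z) with hFlim
  have hptwise : ∀ z ∈ S, Tendsto (fun n => F n z) atTop (𝓝 (Flim z)) := by
    intro z hz
    have hc : CauchySeq (fun n => F n z) := by
      rw [Metric.cauchySeq_iff]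
      intro ε hε
      obtain ⟨N, hN⟩ := key z.re z.re (ε / 4) (by linarith)
      refine ⟨N, fun m hm n hn => ?_⟩
      rw [dist_eq_norm]
      calc ‖F m z - F n z‖ ≤ 2 * (ε / 4) := hN m hm n hn z hz le_rfl le_rfl
        _ < ε := by linarith
    obtain ⟨l, hl⟩ := cauchySeq_tendsto_of_complete hc
    have hFz : Flim z = l := hl.limUnder_eq
    rw [hFz]
    exact hl
  -- uniform convergence on compacts
  have hUK : ∀ K : Set ℂ, K ⊆ S → IsCompact K → TendstoUniformlyOn F Flim atTop K := by
    intro K hKS hK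
    obtain ⟨r, hr⟩ := hK.isBounded.subset_closedBall 0
    have hsub : K ⊆ S ∩ {z : ℂ | -r ≤ z.re ∧ z.re ≤ r} := by
      intro z hz
      have hzr : ‖z‖ ≤ r := by simpa [Metric.mem_closedBall, dist_eq_norm] using hr hz
      have := Complex.abs_re_le_norm z
      rw [abs_le] at this
      exact ⟨hKS hz, by linarith [this.1], by linarith [this.2]⟩
    have hcauchy : UniformCauchySeqOn F atTop (S ∩ {z : ℂ | -r ≤ z.re ∧ z.re ≤ r}) := by
      rw [Metric.uniformCauchySeqOn_iff]
      intro ε hε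
      obtain ⟨N, hN⟩ := key (-r) r (ε / 4) (by linarith)
      refine ⟨N, fun m hm n hn z hz => ?_⟩
      rw [dist_eq_norm]
      calc ‖F m z - F n z‖ ≤ 2 * (ε / 4) := hN m hm n hn z hz.1 hz.2.1 hz.2.2
        _ < ε := by linarith
    exact (hcauchy.mono hsub).tendstoUniformlyOn_of_tendsto
      fun z hz => hptwise z (hKS hz)
  -- continuity
  have hFlimc : ContinuousOn Flim S := by
    intro z hz
    set K : Set ℂ := Set.Icc (z.re - 1) (z.re + 1) ×ℂ Set.Icc (-β) 0 with hK
    have hKc : IsCompact K :=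
      Metric.isCompact_of_isClosed_isBounded (isClosed_Icc.reProdIm isClosed_Icc)
        ((Metric.isBounded_Icc _ _).reProdIm (Metric.isBounded_Icc _ _))
    have hKS : K ⊆ S := by
      intro w hw
      rw [Complex.mem_reProdIm] at hw
      exact ⟨hw.2.1, hw.2.2⟩
    have hcK : ContinuousOn Flim K :=
      (hUK K hKS hKc).continuousOn (Filter.Eventually.of_forall fun n => (hcont n).mono hKS).frequently
    have hzK : z ∈ K := by
      rw [Complex.mem_reProdIm]
      exact ⟨⟨by linarith, by linarith⟩, hz.1, hz.2⟩
    have hmem : K ∈ 𝓝[S] z := by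
      rw [mem_nhdsWithin]
      refine ⟨Complex.re ⁻¹' Set.Ioo (z.re - 1) (z.re + 1),
        isOpen_Ioo.preimage Complex.continuous_re, by simp, ?_⟩
      intro w hw
      rw [Complex.mem_reProdIm]
      exact ⟨⟨hw.1.1.le, hw.1.2.le⟩, hw.2.1, hw.2.2⟩
    exact (hcK z hzK).mono_of_mem_nhdsWithin hmem
  -- holomorphy
  have hUopen : IsOpen {z : ℂ | -β < z.im ∧ z.im < 0} := by
    have : {z : ℂ | -β < z.im ∧ z.im < 0} = Complex.im ⁻¹' Set.Ioo (-β) 0 := rfl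
    rw [this]
    exact isOpen_Ioo.preimage Complex.continuous_im
  have hUS : {z : ℂ | -β < z.im ∧ z.im < 0} ⊆ S := fun z hz => ⟨hz.1.le, hz.2.le⟩
  have hloc : TendstoLocallyUniformlyOn F Flim atTop {z : ℂ | -β < z.im ∧ z.im < 0} :=
    (tendstoLocallyUniformlyOn_iff_forall_isCompact hUopen).2
      fun K hKU hK => hUK K (hKU.trans hUS) hK
  have hdiff : DifferentiableOn ℂ Flim {z : ℂ | -β < z.im ∧ z.im < 0} :=
    hloc.differentiableOn (Filter.Eventually.of_forall fun n z hz =>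
      (hholo n z hz.1 hz.2).differentiableWithinAt) hUopen
  refine ⟨Flim, hFlimc, ?_, ?_, hUK⟩
  · intro z h1 h2
    exact hdiff.differentiableAt (hUopen.mem_nhds ⟨h1, h2⟩)
  · intro t
    constructor
    · refine tendsto_nhds_unique (hptwise (t : ℂ) ?_)
        ((hgconv {t} isCompact_singleton).tendsto_at (Set.mem_singleton t))
      constructor <;> simp <;> linarith
    · refine tendsto_nhds_unique (hptwise ((t : ℂ) - Complex.I * β) ?_)
        ((hhconv {t} isCompact_singleton).tendsto_at (Set.mem_singleton t))
      constructor <;> simp [Complex.sub_im] <;> linarith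
end
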